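/- arXiv:2402.05884 — 5 statements merged into one kernel-verified Lean document; each statement's English description precedes it below -/
import Mathlib

section
/- Let G = (V,E) be a finite connected graph that admits a generalized cutset C = {C_1, ..., C_t} with pass-through numbers τ = (τ_1, ..., τ_t), valence Στ, gap r ≥ 2, and witness partition H = {H_1, ..., H_{Στ+r}}. Then for every integer n with Στ < n < Στ + r, there exists a common monotone valuation v for n agents such that no connected EF1 allocation of G among the n agents exists (hence no connected EF1-outer allocation exists). -/
open Finset

variable {V : Type*}

/-- A piece of an allocation: either empty or inducing a connected subgraph. -/
def ConnPiece (G : SimpleGraph V) (S : Finset V) : Prop :=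
  S = ∅ ∨ (G.induce (S : Set V)).Connected

/-- A connected allocation: a partition of `V` into `n` pieces, each connected. -/
def IsConnAlloc (G : SimpleGraph V) {n : ℕ} (A : Fin n → Finset V) : Prop :=
  (∀ x : V, ∃! i, x ∈ A i) ∧ ∀ i, ConnPiece G (A i)

def IsMonotoneVal (v : Finset V → ℝ) : Prop :=
  v ∅ = 0 ∧ (∀ S, 0 ≤ v S) ∧ ∀ S T : Finset V, S ⊆ T → v S ≤ v T

def IsAdditiveVal (v : Finset V → ℝ) : Prop :=
  (∀ S, 0 ≤ v S) ∧ ∀ S : Finset V, v S = ∑ x ∈ S, v {x}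

def IsEF1 [DecidableEq V] {n : ℕ} (v : Fin n → Finset V → ℝ) (A : Fin n → Finset V) : Prop :=
  ∀ i j : Fin n, v i (A i) ≥ v i (A j) ∨ ∃ x ∈ A j, v i (A i) ≥ v i ((A j).erase x)

def IsEF1Outer [DecidableEq V] (G : SimpleGraph V) {n : ℕ}
    (v : Fin n → Finset V → ℝ) (A : Fin n → Finset V) : Prop :=
  ∀ i j : Fin n, v i (A i) ≥ v i (A j) ∨
    ∃ x ∈ A j, ConnPiece G ((A j).erase x) ∧ v i (A i) ≥ v i ((A j).erase x)

/-- A generalized cutset for `G`, with gap `r ≥ 2`. -/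
structure GenCutset (G : SimpleGraph V) where
  t : ℕ
  C : Fin t → Finset V
  τ : Fin t → ℕ
  r : ℕ
  r_ge : 2 ≤ r
  H : Fin ((∑ i, τ i) + r) → Finset V
  C_nonempty : ∀ i, (C i).Nonempty
  C_disjoint : ∀ i j, i ≠ j → Disjoint (C i) (C j)
  C_connected : ∀ i, (G.induce ((C i : Set V))).Connected
  H_nonempty : ∀ j, (H j).Nonempty
  H_disjoint : ∀ j k, j ≠ k → Disjoint (H j) (H k)
  H_partition : ∀ x : V, (∀ i, x ∉ C i) ↔ ∃ j, x ∈ H j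
  H_independent : ∀ j k, j ≠ k → ∀ x ∈ H j, ∀ y ∈ H k, ¬ G.Adj x y
  contact_unique : ∀ i j, ∀ x ∈ C i, ∀ y ∈ C i,
      (∃ z ∈ H j, G.Adj x z) → (∃ z ∈ H j, G.Adj y z) → x = y
  typeI_tau : ∀ i, (C i).card = 1 → τ i = 1
  typeII_indep : ∀ i i', i ≠ i' → 1 < (C i).card → 1 < (C i').card →
      ∀ x ∈ C i, ∀ y ∈ C i', ¬ G.Adj x y
  typeII_contacts : ∀ i, 1 < (C i).card →
      (∃ S : Finset (Fin ((∑ i, τ i) + r)), S.card = 2 * τ i + 1 ∧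
        ∀ j, j ∈ S ↔ ∃ x ∈ C i, ∃ z ∈ H j, G.Adj x z) ∧
      (∀ x ∈ C i, ∀ j k, (∃ z ∈ H j, G.Adj x z) → (∃ z ∈ H k, G.Adj x z) → j = k)

/-- The valence of a generalized cutset. -/
abbrev GenCutset.valence {G : SimpleGraph V} (cs : GenCutset G) : ℕ := ∑ i, cs.τ i

/-- `S` dominates a member of the cutset. -/
def GenCutset.Dominates {G : SimpleGraph V} (cs : GenCutset G)
    (S : Finset V) (i : Fin cs.t) : Prop :=
  ((cs.C i).card = 1 ∧ cs.C i ⊆ S) ∨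
  (1 < (cs.C i).card ∧ ∃ x, x ∈ cs.C i ∧ x ∈ S ∧ ∃ y, y ∈ cs.C i ∧ y ∈ S ∧ x ≠ y ∧
    (∃ j, ∃ z ∈ cs.H j, G.Adj x z) ∧ (∃ j, ∃ z ∈ cs.H j, G.Adj y z))


section Aux

variable {V : Type*} [Fintype V] [DecidableEq V] {G : SimpleGraph V}

namespace GenCutset

lemma mem_C_or_mem_H (cs : GenCutset G) (x : V) :
    (∃ i, x ∈ cs.C i) ∨ ∃ j, x ∈ cs.H j := by
  by_cases h : ∀ i, x ∉ cs.C i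
  · exact Or.inr ((cs.H_partition x).mp h)
  · push_neg at h; exact Or.inl h

lemma not_mem_C (cs : GenCutset G) {x : V} {j} (h : x ∈ cs.H j) (i) : x ∉ cs.C i :=
  (cs.H_partition x).mpr ⟨j, h⟩ i

lemma not_mem_H (cs : GenCutset G) {x : V} {i} (h : x ∈ cs.C i) (j) : x ∉ cs.H j :=
  fun hj => cs.not_mem_C hj i h

lemma card_cases (cs : GenCutset G) (i) : (cs.C i).card = 1 ∨ 1 < (cs.C i).card := by
  have := Finset.card_pos.mpr (cs.C_nonempty i); omega

lemma dom_typeI (cs : GenCutset G) {S : Finset V} {x : V} {i}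
    (hx : x ∈ cs.C i) (h1 : (cs.C i).card = 1) (hxS : x ∈ S) : cs.Dominates S i := by
  refine Or.inl ⟨h1, ?_⟩
  obtain ⟨c, hc⟩ := Finset.card_eq_one.mp h1
  rw [hc] at hx ⊢
  simp only [Finset.mem_singleton] at hx
  subst hx
  simpa using hxS

lemma dominates_mono (cs : GenCutset G) {S T : Finset V} {i}
    (h : cs.Dominates S i) (hST : S ⊆ T) : cs.Dominates T i := by
  rcases h with ⟨h1, h2⟩ | ⟨h1, x, hxC, hxS, y, hyC, hyS, hxy, hx, hy⟩
  · exact Or.inl ⟨h1, h2.trans hST⟩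
  · exact Or.inr ⟨h1, x, hxC, hST hxS, y, hyC, hST hyS, hxy, hx, hy⟩

lemma not_dominates_empty (cs : GenCutset G) (i) : ¬ cs.Dominates (∅ : Finset V) i := by
  rintro (⟨h1, h2⟩ | ⟨h1, x, hxC, hxS, _⟩)
  · obtain ⟨c, hc⟩ := cs.C_nonempty i
    exact absurd (h2 hc) (by simp)
  · simp at hxS

open Classical in
/-- The valuation: number of H-parts touched plus number of cutset members dominated. -/
noncomputable def uval (cs : GenCutset G) (S : Finset V) : ℕ :=
  (Finset.univ.filter fun k : Fin ((∑ i, cs.τ i) + cs.r) => ((cs.H k) ∩ S).Nonempty).card +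
  (Finset.univ.filter fun i : Fin cs.t => cs.Dominates S i).card

lemma uval_empty (cs : GenCutset G) : cs.uval (∅ : Finset V) = 0 := by
  classical
  rw [uval]
  rw [Finset.filter_false_of_mem (fun k _ => by simp),
      Finset.filter_false_of_mem (fun i _ => cs.not_dominates_empty i)]
  simp

lemma uval_mono (cs : GenCutset G) {S T : Finset V} (h : S ⊆ T) : cs.uval S ≤ cs.uval T := by
  classical
  rw [uval, uval]
  refine Nat.add_le_add (Finset.card_le_card ?_) (Finset.card_le_card ?_)
  · exact Finset.monotone_filter_right _ fun k _ hk =>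
      hk.mono (Finset.inter_subset_inter (Finset.Subset.refl _) h)
  · exact Finset.monotone_filter_right _ fun i _ hi => cs.dominates_mono hi h

lemma uval_erase (cs : GenCutset G) (S : Finset V) (x : V) :
    cs.uval S ≤ cs.uval (S.erase x) + 1 := by
  classical
  by_cases hxS : x ∈ S
  swap
  · rw [Finset.erase_eq_of_notMem hxS]; omega
  rcases cs.mem_C_or_mem_H x with ⟨i0, hi0⟩ | ⟨k0, hk0⟩
  · -- x is a cutset vertex: touched parts unchanged, dominated may drop by one
    have htouch : (Finset.univ.filter fun k : Fin ((∑ i, cs.τ i) + cs.r) =>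
        ((cs.H k) ∩ S).Nonempty) =
        (Finset.univ.filter fun k => ((cs.H k) ∩ (S.erase x)).Nonempty) := by
      apply Finset.filter_congr
      intro k _
      constructor
      · rintro ⟨z, hz⟩
        rw [Finset.mem_inter] at hz
        refine ⟨z, Finset.mem_inter.mpr ⟨hz.1, Finset.mem_erase.mpr ⟨?_, hz.2⟩⟩⟩
        rintro rfl
        exact cs.not_mem_H hi0 k hz.1
      · exact fun hne => hne.mono (Finset.inter_subset_inter (Finset.Subset.refl _)
          (Finset.erase_subset _ _))
    have hdom : (Finset.univ.filter fun i : Fin cs.t => cs.Dominates S i) ⊆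
        insert i0 (Finset.univ.filter fun i => cs.Dominates (S.erase x) i) := by
      intro i hi
      rw [Finset.mem_filter] at hi
      by_cases hii : i = i0
      · exact Finset.mem_insert.mpr (Or.inl hii)
      · refine Finset.mem_insert.mpr (Or.inr (Finset.mem_filter.mpr ⟨Finset.mem_univ _, ?_⟩))
        have hxC : x ∉ cs.C i := fun hx' =>
          Finset.disjoint_left.mp (cs.C_disjoint i i0 hii) hx' hi0
        rcases hi.2 with ⟨h1, h2⟩ | ⟨h1, a, haC, haS, b, hbC, hbS, hab, ha, hb⟩
        · refine Or.inl ⟨h1, fun y hy => Finset.mem_erase.mpr ⟨?_, h2 hy⟩⟩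
          rintro rfl; exact hxC hy
        · refine Or.inr ⟨h1, a, haC, Finset.mem_erase.mpr ⟨?_, haS⟩, b, hbC,
            Finset.mem_erase.mpr ⟨?_, hbS⟩, hab, ha, hb⟩
          · rintro rfl; exact hxC haC
          · rintro rfl; exact hxC hbC
    rw [uval, uval, htouch]
    have := Finset.card_le_card hdom
    have := Finset.card_insert_le i0
      (Finset.univ.filter fun i => cs.Dominates (S.erase x) i)
    omega
  · -- x is an H vertex: dominated unchanged, touched may drop by one
    have hdom : (Finset.univ.filter fun i : Fin cs.t => cs.Dominates S i) =
        (Finset.univ.filter fun i => cs.Dominates (S.erase x) i) := by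
      apply Finset.filter_congr
      intro i _
      constructor
      · intro hi
        have hxC : ∀ i', x ∉ cs.C i' := fun i' => cs.not_mem_C hk0 i'
        rcases hi with ⟨h1, h2⟩ | ⟨h1, a, haC, haS, b, hbC, hbS, hab, ha, hb⟩
        · refine Or.inl ⟨h1, fun y hy => Finset.mem_erase.mpr ⟨?_, h2 hy⟩⟩
          rintro rfl; exact hxC i hy
        · refine Or.inr ⟨h1, a, haC, Finset.mem_erase.mpr ⟨?_, haS⟩, b, hbC,
            Finset.mem_erase.mpr ⟨?_, hbS⟩, hab, ha, hb⟩
          · rintro rfl; exact hxC i haC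
          · rintro rfl; exact hxC i hbC
      · exact fun hi => cs.dominates_mono hi (Finset.erase_subset _ _)
    have htouch : (Finset.univ.filter fun k : Fin ((∑ i, cs.τ i) + cs.r) =>
        ((cs.H k) ∩ S).Nonempty) ⊆
        insert k0 (Finset.univ.filter fun k => ((cs.H k) ∩ (S.erase x)).Nonempty) := by
      intro k hk
      rw [Finset.mem_filter] at hk
      by_cases hkk : k = k0
      · exact Finset.mem_insert.mpr (Or.inl hkk)
      · refine Finset.mem_insert.mpr (Or.inr (Finset.mem_filter.mpr ⟨Finset.mem_univ _, ?_⟩))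
        obtain ⟨z, hz⟩ := hk.2
        rw [Finset.mem_inter] at hz
        refine ⟨z, Finset.mem_inter.mpr ⟨hz.1, Finset.mem_erase.mpr ⟨?_, hz.2⟩⟩⟩
        rintro rfl
        exact Finset.disjoint_left.mp (cs.H_disjoint k k0 hkk) hz.1 hk0
    rw [uval, uval, hdom]
    have := Finset.card_le_card htouch
    have := Finset.card_insert_le k0
      (Finset.univ.filter fun k => ((cs.H k) ∩ (S.erase x)).Nonempty)
    omega

/-- Key structural lemma: a walk inside `S` from one H-part to a different H-part
forces `S` to dominate some cutset member. -/
lemma key_walk (cs : GenCutset G) (S : Finset V) :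
    ∀ {x y : (S : Set V)} (_ : (G.induce (S : Set V)).Walk x y)
      (j k : Fin ((∑ i, cs.τ i) + cs.r)), (↑y ∈ cs.H k) →
      ((↑x ∈ cs.H j) ∨ (∃ i, 1 < (cs.C i).card ∧ ↑x ∈ cs.C i ∧
        ∃ e ∈ cs.C i, e ∈ S ∧ ∃ z ∈ cs.H j, G.Adj e z)) →
      (∃ i, cs.Dominates S i) ∨ j = k := by
  intro x y w
  induction w with
  | nil =>
    intro j k hyk hst
    rcases hst with hxH | ⟨i, _, hxC, _⟩
    · by_contra hcon
      push_neg at hcon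
      exact Finset.disjoint_left.mp (cs.H_disjoint j k hcon.2) hxH hyk
    · exact absurd hyk (cs.not_mem_H hxC k)
  | @cons a b c h p ih =>
    intro j k hyk hst
    have hadj : G.Adj (↑a : V) (↑b : V) := h
    have hbS : (↑b : V) ∈ S := b.2
    rcases hst with haH | ⟨i, hcard, haC, e, heC, heS, z, hzH, hez⟩
    · -- current vertex in H j
      rcases cs.mem_C_or_mem_H (↑b : V) with ⟨i', hbC⟩ | ⟨j', hbH⟩
      · rcases cs.card_cases i' with h1 | h2
        · exact Or.inl ⟨i', cs.dom_typeI hbC h1 hbS⟩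
        · exact ih j k hyk (Or.inr ⟨i', h2, hbC, ↑b, hbC, hbS, ↑a, haH, hadj.symm⟩)
      · by_cases hjj : j' = j
        · subst hjj
          exact ih j' k hyk (Or.inl hbH)
        · exact absurd hadj (cs.H_independent j j' (Ne.symm hjj) _ haH _ hbH)
    · -- current vertex in type-II C i, with entry contact e for part j
      rcases cs.mem_C_or_mem_H (↑b : V) with ⟨i', hbC⟩ | ⟨k', hbH⟩
      · rcases cs.card_cases i' with h1 | h2
        · exact Or.inl ⟨i', cs.dom_typeI hbC h1 hbS⟩
        · have hii : i' = i := by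
            by_contra hne
            exact cs.typeII_indep i i' (fun hh => hne (hh.symm)) hcard h2 _ haC _ hbC hadj
          subst hii
          exact ih j k hyk (Or.inr ⟨i', hcard, hbC, e, heC, heS, z, hzH, hez⟩)
      · -- exiting C i at vertex a into H k'
        have haS : (↑a : V) ∈ S := a.2
        by_cases hae : (↑a : V) = e
        · -- same as entry contact: part unchanged
          have hjk' : j = k' := (cs.typeII_contacts i hcard).2 e heC j k'
            ⟨z, hzH, hez⟩ ⟨↑b, hbH, hae ▸ hadj⟩
          subst hjk'
          exact ih j k hyk (Or.inl hbH)
        · -- two distinct contacts in S: dominate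
          exact Or.inl ⟨i, Or.inr ⟨hcard, ↑a, haC, haS, e, heC, heS, hae,
            ⟨k', ↑b, hbH, hadj⟩, ⟨j, z, hzH, hez⟩⟩⟩

lemma dominates_of_touch_two (cs : GenCutset G) {S : Finset V}
    (hconn : (G.induce (S : Set V)).Connected) {j k} (hjk : j ≠ k)
    {a b : V} (haH : a ∈ cs.H j) (haS : a ∈ S) (hbH : b ∈ cs.H k) (hbS : b ∈ S) :
    ∃ i, cs.Dominates S i := by
  obtain ⟨w⟩ := hconn.preconnected ⟨a, Finset.mem_coe.mpr haS⟩ ⟨b, Finset.mem_coe.mpr hbS⟩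
  rcases cs.key_walk S w j k hbH (Or.inl haH) with h | h
  · exact h
  · exact absurd h hjk

/-- Fiber bound: at most `τ i` pieces of a partition can dominate `C i`. -/
lemma dom_fiber_card_le (cs : GenCutset G) {n : ℕ} (A : Fin n → Finset V)
    (hA : ∀ x : V, ∃! i, x ∈ A i) (i : Fin cs.t) (F : Finset (Fin n))
    (hF : ∀ P ∈ F, cs.Dominates (A P) i) : F.card ≤ cs.τ i := by
  classical
  have hdisj : ∀ P Q : Fin n, P ≠ Q → ∀ x : V, x ∈ A P → x ∈ A Q → False := by
    intro P Q hPQ x hxP hxQ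
    obtain ⟨_, _, huniq⟩ := hA x
    exact hPQ ((huniq P hxP).trans (huniq Q hxQ).symm)
  rcases cs.card_cases i with h1 | h2
  · -- type I
    rw [cs.typeI_tau i h1]
    obtain ⟨c, hc⟩ := Finset.card_eq_one.mp h1
    refine Finset.card_le_one.mpr fun P hP Q hQ => ?_
    have hcP : c ∈ A P := by
      rcases hF P hP with ⟨_, hsub⟩ | ⟨hlt, _⟩
      · exact hsub (hc ▸ Finset.mem_singleton_self c)
      · omega
    have hcQ : c ∈ A Q := by
      rcases hF Q hQ with ⟨_, hsub⟩ | ⟨hlt, _⟩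
      · exact hsub (hc ▸ Finset.mem_singleton_self c)
      · omega
    by_contra hPQ
    exact hdisj P Q hPQ c hcP hcQ
  · -- type II
    obtain ⟨⟨S₀, hS₀card, hS₀mem⟩, huniq⟩ := cs.typeII_contacts i h2
    set Q : Fin n → Fin ((∑ i, cs.τ i) + cs.r) → Prop :=
      fun P j => ∃ w, w ∈ cs.C i ∧ w ∈ A P ∧ ∃ z ∈ cs.H j, G.Adj w z with hQdef
    have hQdet : ∀ P P' j, Q P j → Q P' j → P = P' := by
      intro P P' j ⟨w, hwC, hwA, hw⟩ ⟨w', hwC', hwA', hw'⟩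
      have : w = w' := cs.contact_unique i j w hwC w' hwC' hw hw'
      subst this
      by_contra hPP
      exact hdisj P P' hPP w hwA hwA'
    set J : Fin n → Finset (Fin ((∑ i, cs.τ i) + cs.r)) :=
      fun P => S₀.filter (fun j => Q P j) with hJdef
    have hJ2 : ∀ P ∈ F, 2 ≤ (J P).card := by
      intro P hP
      rcases hF P hP with ⟨hc1, _⟩ | ⟨_, x, hxC, hxA, y, hyC, hyA, hxy, ⟨jx, hjx⟩, ⟨jy, hjy⟩⟩
      · omega
      have hjxy : jx ≠ jy := by
        rintro rfl
        exact hxy (cs.contact_unique i jx x hxC y hyC hjx hjy)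
      have hx' : jx ∈ J P := Finset.mem_filter.mpr
        ⟨(hS₀mem jx).mpr ⟨x, hxC, hjx⟩, ⟨x, hxC, hxA, hjx⟩⟩
      have hy' : jy ∈ J P := Finset.mem_filter.mpr
        ⟨(hS₀mem jy).mpr ⟨y, hyC, hjy⟩, ⟨y, hyC, hyA, hjy⟩⟩
      exact Finset.one_lt_card.mpr ⟨jx, hx', jy, hy', hjxy⟩
    have hJdisj : ∀ P ∈ F, ∀ P' ∈ F, P ≠ P' → Disjoint (J P) (J P') := by
      intro P _ P' _ hPP
      rw [Finset.disjoint_left]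
      intro j hjP hjP'
      exact hPP (hQdet P P' j (Finset.mem_filter.mp hjP).2 (Finset.mem_filter.mp hjP').2)
    have hsum : 2 * F.card ≤ (F.biUnion J).card := by
      rw [Finset.card_biUnion hJdisj]
      calc 2 * F.card = ∑ _P ∈ F, 2 := by rw [Finset.sum_const, smul_eq_mul, mul_comm]
      _ ≤ ∑ P ∈ F, (J P).card := Finset.sum_le_sum hJ2
    have hsub : F.biUnion J ⊆ S₀ := by
      intro j hj
      obtain ⟨P, _, hjP⟩ := Finset.mem_biUnion.mp hj
      exact (Finset.mem_filter.mp hjP).1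
    have := Finset.card_le_card hsub
    omega

lemma exists_low (cs : GenCutset G) {n : ℕ} (hn : cs.valence < n)
    (A : Fin n → Finset V) (hA : IsConnAlloc G A) : ∃ P, cs.uval (A P) ≤ 1 := by
  classical
  by_contra hno
  push_neg at hno
  have hdom : ∀ P, ∃ i, cs.Dominates (A P) i := by
    intro P
    by_contra hnd
    push_neg at hnd
    have hD0 : (Finset.univ.filter fun i : Fin cs.t => cs.Dominates (A P) i) = ∅ :=
      Finset.filter_false_of_mem fun i _ => hnd i
    have h2 : 2 ≤ (Finset.univ.filter fun k : Fin ((∑ i, cs.τ i) + cs.r) =>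
        ((cs.H k) ∩ (A P)).Nonempty).card := by
      have := hno P
      rw [uval, hD0] at this
      simp at this; omega
    obtain ⟨k1, hk1, k2, hk2, hkk⟩ := Finset.one_lt_card.mp h2
    obtain ⟨a, ha⟩ := (Finset.mem_filter.mp hk1).2
    obtain ⟨b, hb⟩ := (Finset.mem_filter.mp hk2).2
    rw [Finset.mem_inter] at ha hb
    have hconn : (G.induce ((A P : Set V))).Connected := by
      rcases hA.2 P with hemp | hc
      · rw [hemp] at ha; exact absurd ha.2 (by simp)
      · exact hc
    obtain ⟨i, hi⟩ := cs.dominates_of_touch_two hconn hkk ha.1 ha.2 hb.1 hb.2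
    exact hnd i hi
  choose f hf using hdom
  have hle : (Finset.univ : Finset (Fin n)).card ≤ ∑ i, cs.τ i := by
    rw [Finset.card_eq_sum_card_fiberwise (fun P _ => Finset.mem_univ (f P))]
    refine Finset.sum_le_sum fun i _ => ?_
    refine cs.dom_fiber_card_le A hA.1 i _ fun P hP => ?_
    have : f P = i := (Finset.mem_filter.mp hP).2
    exact this ▸ hf P
  simp only [Finset.card_univ, Fintype.card_fin] at hle
  exact absurd hle (by unfold GenCutset.valence at hn; omega)

lemma exists_high (cs : GenCutset G) {n : ℕ} (hn : n < cs.valence + cs.r)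
    (A : Fin n → Finset V) (hA : IsConnAlloc G A) : ∃ P, 3 ≤ cs.uval (A P) := by
  classical
  by_contra hno
  push_neg at hno
  have hT : ∀ P, (Finset.univ.filter fun k : Fin ((∑ i, cs.τ i) + cs.r) =>
      ((cs.H k) ∩ (A P)).Nonempty).card ≤ 1 := by
    intro P
    by_contra hTP
    push_neg at hTP
    obtain ⟨k1, hk1, k2, hk2, hkk⟩ := Finset.one_lt_card.mp hTP
    obtain ⟨a, ha⟩ := (Finset.mem_filter.mp hk1).2
    obtain ⟨b, hb⟩ := (Finset.mem_filter.mp hk2).2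
    rw [Finset.mem_inter] at ha hb
    have hconn : (G.induce ((A P : Set V))).Connected := by
      rcases hA.2 P with hemp | hc
      · rw [hemp] at ha; exact absurd ha.2 (by simp)
      · exact hc
    obtain ⟨i, hi⟩ := cs.dominates_of_touch_two hconn hkk ha.1 ha.2 hb.1 hb.2
    have hD1 : 1 ≤ (Finset.univ.filter fun i : Fin cs.t => cs.Dominates (A P) i).card :=
      Finset.card_pos.mpr ⟨i, Finset.mem_filter.mpr ⟨Finset.mem_univ _, hi⟩⟩
    have := hno P
    rw [uval] at this
    omega
  -- map each part to the piece containing a chosen vertex of it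
  have hg : ∀ k : Fin ((∑ i, cs.τ i) + cs.r), ∃ P : Fin n, ((cs.H k) ∩ (A P)).Nonempty := by
    intro k
    obtain ⟨x, hx⟩ := cs.H_nonempty k
    obtain ⟨P, hP, _⟩ := hA.1 x
    exact ⟨P, ⟨x, Finset.mem_inter.mpr ⟨hx, hP⟩⟩⟩
  choose g hgspec using hg
  have hginj : Function.Injective g := by
    intro k1 k2 hgk
    have h1 : k1 ∈ (Finset.univ.filter fun k => ((cs.H k) ∩ (A (g k1))).Nonempty) :=
      Finset.mem_filter.mpr ⟨Finset.mem_univ _, hgspec k1⟩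
    have h2 : k2 ∈ (Finset.univ.filter fun k => ((cs.H k) ∩ (A (g k1))).Nonempty) :=
      Finset.mem_filter.mpr ⟨Finset.mem_univ _, hgk ▸ hgspec k2⟩
    exact Finset.card_le_one.mp (hT (g k1)) k1 h1 k2 h2
  have := Fintype.card_le_of_injective g hginj
  simp only [Fintype.card_fin] at this
  exact absurd this (by unfold GenCutset.valence at hn; omega)

end GenCutset

end Aux

/-- A generalized cutset blocks connected EF1 (hence EF1-outer) allocations,
for each number of agents `n` in the critical interval, under some common monotone valuation. -/
theorem cutset_blocks_EF1_monotone {V : Type*} [Fintype V] [DecidableEq V]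
    (G : SimpleGraph V) (hG : G.Connected) (cs : GenCutset G)
    (n : ℕ) (hn₁ : cs.valence < n) (hn₂ : n < cs.valence + cs.r) :
    ∃ v : Finset V → ℝ, IsMonotoneVal v ∧
      ∀ A : Fin n → Finset V, IsConnAlloc G A →
        ¬ IsEF1 (fun _ : Fin n => v) A ∧ ¬ IsEF1Outer G (fun _ : Fin n => v) A := by
  classical
  refine ⟨fun S => (cs.uval S : ℝ), ⟨?_, ?_, ?_⟩, ?_⟩
  · show ((cs.uval ∅ : ℕ) : ℝ) = 0
    rw [cs.uval_empty]; norm_num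
  · intro S; positivity
  · intro S T hST
    show ((cs.uval S : ℕ) : ℝ) ≤ ((cs.uval T : ℕ) : ℝ)
    exact_mod_cast cs.uval_mono hST
  intro A hA
  obtain ⟨i₀, hi₀⟩ := cs.exists_low hn₁ A hA
  obtain ⟨j₀, hj₀⟩ := cs.exists_high hn₂ A hA
  have hkey1 : ¬ ((cs.uval (A i₀) : ℝ) ≥ (cs.uval (A j₀) : ℝ)) := by
    rw [not_le]
    exact_mod_cast by omega
  have hkey2 : ∀ x ∈ A j₀, ¬ ((cs.uval (A i₀) : ℝ) ≥ (cs.uval ((A j₀).erase x) : ℝ)) := by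
    intro x _
    rw [not_le]
    have := cs.uval_erase (A j₀) x
    exact_mod_cast by omega
  constructor
  · intro hEF1
    rcases hEF1 i₀ j₀ with h | ⟨x, hx, h⟩
    · exact hkey1 h
    · exact hkey2 x hx h
  · intro hEF1
    rcases hEF1 i₀ j₀ with h | ⟨x, hx, _, h⟩
    · exact hkey1 h
    · exact hkey2 x hx h
end

section
/- Let G = (V,E) be a finite connected graph that admits a tame generalized cutset C (one with at most one type-II member) with valence Στ, gap r ≥ 2, and witness partition H. Then for every integer n with Στ < n < Στ + r, there exists a common additive valuation v for n agents such that no connected EF1 allocation of G among the n agents exists (hence no connected EF1-outer allocation exists). -/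
open Finset

variable {V : Type*}

/-- A generalized cutset is tame if it has at most one type-II member. -/
def GenCutset.Tame {V : Type*} {G : SimpleGraph V} (cs : GenCutset G) : Prop :=
  ∀ i i' : Fin cs.t, 1 < (cs.C i).card → 1 < (cs.C i').card → i = i'

namespace TameCutsetAux

set_option linter.unusedSectionVars false

open scoped Classical

variable {V : Type*} [Fintype V] [DecidableEq V] {G : SimpleGraph V}

/-- Crossing lemma: a walk in an induced subgraph from a `P`-vertex to a
non-`P`-vertex crosses an edge from `P` to non-`P`. -/
lemma exists_crossing {S : Set V} {P : V → Prop} :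
    ∀ {u v : S} (_ : (G.induce S).Walk u v), P u.1 → ¬ P v.1 →
      ∃ a b : V, a ∈ S ∧ b ∈ S ∧ P a ∧ ¬ P b ∧ G.Adj a b := by
  intro u v p
  induction p with
  | nil => intro hu hv; exact absurd hu hv
  | @cons u w v h q ih =>
    intro hu hv
    by_cases hw : P w.1
    · exact ih hw hv
    · exact ⟨u.1, w.1, u.2, w.2, hu, hw, h⟩

/-- Counting lemma: pieces of a partition intersect any `W` in `W.card` total. -/
lemma sum_inter_card {n : ℕ} (A : Fin n → Finset V) (hA : ∀ x : V, ∃! i, x ∈ A i)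
    (W : Finset V) : ∑ i, (A i ∩ W).card = W.card := by
  have h1 : ∀ i, (A i ∩ W).card = ∑ x ∈ W, if x ∈ A i then 1 else 0 := by
    intro i
    rw [Finset.inter_comm, ← Finset.filter_mem_eq_inter, Finset.card_filter]
  simp_rw [h1]
  rw [Finset.sum_comm, Finset.card_eq_sum_ones W]
  refine Finset.sum_congr rfl fun x hx => ?_
  obtain ⟨i₀, hi₀, hu⟩ := hA x
  rw [Finset.sum_eq_single i₀]
  · simp [hi₀]
  · intro j _ hj
    simp only [ite_eq_right_iff]
    intro hxj; exact absurd (hu j hxj) hj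
  · simp

variable (cs : GenCutset G)

noncomputable def rep (j : Fin (cs.valence + cs.r)) : V := (cs.H_nonempty j).choose

lemma rep_mem (j : Fin (cs.valence + cs.r)) : rep cs j ∈ cs.H j := (cs.H_nonempty j).choose_spec

lemma rep_inj : Function.Injective (rep cs) := by
  intro j k h
  by_contra hne
  exact (Finset.disjoint_left.mp (cs.H_disjoint j k hne)) (rep_mem cs j)
    (h ▸ rep_mem cs k)

noncomputable def Tset : Finset V :=
  Finset.univ.filter fun x => ∃ i, x ∈ cs.C i ∧ (cs.C i).card = 1

noncomputable def Kset : Finset V :=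
  Finset.univ.filter fun x => ∃ i, x ∈ cs.C i ∧ 1 < (cs.C i).card ∧
    ∃ j, ∃ z ∈ cs.H j, G.Adj x z

noncomputable def Rset : Finset V := Finset.univ.image (rep cs)

noncomputable def BN : ℕ := 2 * (cs.valence + cs.r) + 2 * cs.valence + 4

noncomputable def w (x : V) : ℕ :=
  if x ∈ Tset cs then BN cs else if x ∈ Rset cs then 2 else if x ∈ Kset cs then 1 else 0

noncomputable def vN (S : Finset V) : ℕ := ∑ x ∈ S, w cs x

lemma notMem_C_of_mem_R {x : V} (hx : x ∈ Rset cs) (i : Fin cs.t) : x ∉ cs.C i := by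
  obtain ⟨j, -, rfl⟩ := Finset.mem_image.mp hx
  exact ((cs.H_partition _).mpr ⟨j, rep_mem cs j⟩) i

lemma w_eq (x : V) : w cs x = BN cs * (if x ∈ Tset cs then 1 else 0)
    + 2 * (if x ∈ Rset cs then 1 else 0) + (if x ∈ Kset cs then 1 else 0) := by
  unfold w
  by_cases hT : x ∈ Tset cs
  · obtain ⟨-, i, hxi, hcard⟩ := Finset.mem_filter.mp hT
    have hR : x ∉ Rset cs := fun h => notMem_C_of_mem_R cs h i hxi
    have hK : x ∉ Kset cs := by
      intro h
      obtain ⟨-, i', hxi', hc', -⟩ := Finset.mem_filter.mp h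
      have hne : i ≠ i' := by intro he; rw [he] at hcard; omega
      exact Finset.disjoint_left.mp (cs.C_disjoint i i' hne) hxi hxi'
    simp [hT, hR, hK]
  · by_cases hR : x ∈ Rset cs
    · have hK : x ∉ Kset cs := by
        intro h
        obtain ⟨-, i', hxi', -⟩ := Finset.mem_filter.mp h
        exact notMem_C_of_mem_R cs hR i' hxi'
      simp [hT, hR, hK]
    · by_cases hK : x ∈ Kset cs <;> simp [hT, hR, hK]

lemma vN_eq (S : Finset V) : vN cs S = BN cs * (S ∩ Tset cs).card
    + 2 * (S ∩ Rset cs).card + (S ∩ Kset cs).card := by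
  have hcard : ∀ W : Finset V, (S ∩ W).card = ∑ x ∈ S, if x ∈ W then 1 else 0 := by
    intro W
    rw [← Finset.filter_mem_eq_inter, Finset.card_filter]
  unfold vN
  simp_rw [w_eq cs, hcard]
  rw [Finset.sum_add_distrib, Finset.sum_add_distrib, Finset.mul_sum, Finset.mul_sum]

lemma card_R : (Rset cs).card = cs.valence + cs.r := by
  unfold Rset
  rw [Finset.card_image_of_injective _ (rep_inj cs), Finset.card_univ, Fintype.card_fin]

noncomputable def t1 : ℕ := (Finset.univ.filter fun i => (cs.C i).card = 1).card

lemma sum_tau_t1 : ∑ i ∈ Finset.univ.filter (fun i => (cs.C i).card = 1), cs.τ i = t1 cs := by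
  unfold t1
  rw [Finset.card_eq_sum_ones]
  exact Finset.sum_congr rfl fun i hi => cs.typeI_tau i (Finset.mem_filter.mp hi).2

lemma t1_le : t1 cs ≤ cs.valence := by
  rw [← sum_tau_t1 cs]
  exact Finset.sum_le_sum_of_subset (Finset.filter_subset _ _)

lemma card_T : (Tset cs).card ≤ t1 cs := by
  rcases Finset.eq_empty_or_nonempty (Tset cs) with h | ⟨x₀, hx₀⟩
  · simp [h]
  · obtain ⟨i₀, -⟩ := (Finset.mem_filter.mp hx₀).2
    apply Finset.card_le_card_of_injOn
      (fun x => if h : ∃ i, x ∈ cs.C i ∧ (cs.C i).card = 1 then h.choose else i₀)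
    · intro x hx
      obtain ⟨-, hex⟩ := Finset.mem_filter.mp hx
      simp only [dif_pos hex]
      exact Finset.mem_filter.mpr ⟨Finset.mem_univ _, hex.choose_spec.2⟩
    · intro x hx y hy hxy
      obtain ⟨-, hex⟩ := Finset.mem_filter.mp hx
      obtain ⟨-, hey⟩ := Finset.mem_filter.mp hy
      simp only [dif_pos hex, dif_pos hey] at hxy
      obtain ⟨hx1, hx2⟩ := hex.choose_spec
      obtain ⟨hy1, hy2⟩ := hey.choose_spec
      rw [hxy] at hx1
      obtain ⟨a, ha⟩ := Finset.card_eq_one.mp hy2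
      rw [ha, Finset.mem_singleton] at hx1 hy1
      rw [hx1, hy1]

lemma card_K (htame : cs.Tame) : (Kset cs).card + 2 * t1 cs ≤ 2 * cs.valence + 1 := by
  by_cases hex : ∃ i₀, 1 < (cs.C i₀).card
  · obtain ⟨i₀, hi₀⟩ := hex
    obtain ⟨⟨Sp, hScard, hSmem⟩, -⟩ := cs.typeII_contacts i₀ hi₀
    have hNpos : 0 < cs.valence + cs.r := by have := cs.r_ge; omega
    have hKcard : (Kset cs).card ≤ 2 * cs.τ i₀ + 1 := by
      rw [← hScard]
      apply Finset.card_le_card_of_injOn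
        (fun x => if h : ∃ j, ∃ z ∈ cs.H j, G.Adj x z then h.choose else ⟨0, hNpos⟩)
      · intro x hx
        obtain ⟨-, i, hxi, hci, hadj⟩ := Finset.mem_filter.mp hx
        have hii : i = i₀ := htame i i₀ hci hi₀
        subst hii
        simp only [dif_pos hadj]
        exact (hSmem _).mpr ⟨x, hxi, hadj.choose_spec⟩
      · intro x hx y hy hxy
        obtain ⟨-, i, hxi, hci, hadjx⟩ := Finset.mem_filter.mp hx
        obtain ⟨-, i', hyi, hci', hadjy⟩ := Finset.mem_filter.mp hy
        have hii : i = i₀ := htame i i₀ hci hi₀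
        have hii' : i' = i₀ := htame i' i₀ hci' hi₀
        rw [hii] at hxi
        rw [hii'] at hyi
        simp only [dif_pos hadjx, dif_pos hadjy] at hxy
        have hay := hadjy.choose_spec
        rw [← hxy] at hay
        exact cs.contact_unique i₀ hadjx.choose x hxi y hyi hadjx.choose_spec hay
    have hni : i₀ ∉ Finset.univ.filter fun i => (cs.C i).card = 1 := by
      simp only [Finset.mem_filter, Finset.mem_univ, true_and]
      omega
    have h2 := Finset.sum_le_sum_of_subset
      (Finset.subset_univ (insert i₀ (Finset.univ.filter fun i => (cs.C i).card = 1)))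
      (f := cs.τ)
    rw [Finset.sum_insert hni, sum_tau_t1 cs] at h2
    have : cs.τ i₀ + t1 cs ≤ cs.valence := h2
    omega
  · have hK0 : Kset cs = ∅ := by
      rw [Finset.eq_empty_iff_forall_notMem]
      intro x hx
      obtain ⟨-, i, -, hci, -⟩ := Finset.mem_filter.mp hx
      exact hex ⟨i, hci⟩
    rw [hK0]
    have := t1_le cs
    simp
    omega

/-- Key structural lemma: a connected piece avoiding all type-I cut vertices
either holds at most one representative, or holds at least as many contacts. -/
lemma key_struct (S : Finset V) (hconn : ConnPiece G S) (hT : S ∩ Tset cs = ∅) :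
    (S ∩ Rset cs).card ≤ 1 ∨ (S ∩ Rset cs).card ≤ (S ∩ Kset cs).card := by
  by_cases h1 : (S ∩ Rset cs).card ≤ 1
  · exact Or.inl h1
  right
  push_neg at h1
  have hScon : (G.induce (S : Set V)).Connected := by
    rcases hconn with h | h
    · exfalso; rw [h] at h1; simp at h1
    · exact h
  have key : ∀ x ∈ S ∩ Rset cs, ∀ j, rep cs j = x →
      ∃ c, c ∈ S ∩ Kset cs ∧ ∃ z ∈ cs.H j, G.Adj c z := by
    intro x hx j hjx
    obtain ⟨y', hy', x', hx', hne⟩ := Finset.one_lt_card.mp h1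
    obtain ⟨y, hy, hyx⟩ : ∃ y ∈ S ∩ Rset cs, y ≠ x := by
      rcases eq_or_ne y' x with rfl | h
      · exact ⟨x', hx', fun h => hne h.symm⟩
      · exact ⟨y', hy', h⟩
    obtain ⟨j', -, hj'y⟩ := Finset.mem_image.mp (Finset.mem_inter.mp hy).2
    have hj'ne : j' ≠ j := fun h => hyx (by rw [← hj'y, h, hjx])
    have hyS : y ∈ S := (Finset.mem_inter.mp hy).1
    have hxS : x ∈ S := (Finset.mem_inter.mp hx).1
    have hxH : x ∈ cs.H j := hjx ▸ rep_mem cs j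
    have hyH : y ∈ cs.H j' := hj'y ▸ rep_mem cs j'
    have hyNH : y ∉ cs.H j := fun h =>
      Finset.disjoint_left.mp (cs.H_disjoint j' j hj'ne) hyH h
    obtain ⟨p⟩ := hScon.preconnected ⟨x, by simpa using hxS⟩ ⟨y, by simpa using hyS⟩
    obtain ⟨a, b, haS, hbS, haP, hbP, hab⟩ :=
      exists_crossing (P := (· ∈ cs.H j)) p hxH hyNH
    have haS' : a ∈ S := by simpa using haS
    have hbS' : b ∈ S := by simpa using hbS
    have hbH : ∀ k, b ∉ cs.H k := by
      intro k hbk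
      have hkj : k ≠ j := fun h => hbP (h ▸ hbk)
      exact cs.H_independent k j hkj b hbk a haP hab.symm
    have hbC : ∃ i, b ∈ cs.C i := by
      by_contra h
      push_neg at h
      obtain ⟨k, hk⟩ := (cs.H_partition b).mp h
      exact hbH k hk
    obtain ⟨i, hbi⟩ := hbC
    have hcard : 1 < (cs.C i).card := by
      rcases Nat.lt_or_ge 1 (cs.C i).card with h | h
      · exact h
      · exfalso
        have h1c : (cs.C i).card = 1 :=
          le_antisymm h (cs.C_nonempty i).card_pos
        have hbT : b ∈ Tset cs :=
          Finset.mem_filter.mpr ⟨Finset.mem_univ _, i, hbi, h1c⟩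
        exact (Finset.eq_empty_iff_forall_notMem.mp hT b)
          (Finset.mem_inter.mpr ⟨hbS', hbT⟩)
    exact ⟨b, Finset.mem_inter.mpr ⟨hbS',
      Finset.mem_filter.mpr ⟨Finset.mem_univ _, i, hbi, hcard, j, a, haP, hab.symm⟩⟩,
      a, haP, hab.symm⟩
  apply Finset.card_le_card_of_injOn
    (fun x => if h : x ∈ S ∩ Rset cs ∧ ∃ j, rep cs j = x
      then (key x h.1 h.2.choose h.2.choose_spec).choose else x)
  · intro x hx
    have hcond : x ∈ S ∩ Rset cs ∧ ∃ j, rep cs j = x := by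
      refine ⟨hx, ?_⟩
      obtain ⟨j, -, hj⟩ := Finset.mem_image.mp (Finset.mem_inter.mp hx).2
      exact ⟨j, hj⟩
    simp only [dif_pos hcond]
    exact (key x hcond.1 _ hcond.2.choose_spec).choose_spec.1
  · intro x hx y hy hxy
    have hcx : x ∈ S ∩ Rset cs ∧ ∃ j, rep cs j = x := by
      refine ⟨hx, ?_⟩
      obtain ⟨j, -, hj⟩ := Finset.mem_image.mp (Finset.mem_inter.mp hx).2
      exact ⟨j, hj⟩
    have hcy : y ∈ S ∩ Rset cs ∧ ∃ j, rep cs j = y := by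
      refine ⟨hy, ?_⟩
      obtain ⟨j, -, hj⟩ := Finset.mem_image.mp (Finset.mem_inter.mp hy).2
      exact ⟨j, hj⟩
    simp only [dif_pos hcx, dif_pos hcy] at hxy
    obtain ⟨hcxK, hcxadj⟩ := (key x hcx.1 _ hcx.2.choose_spec).choose_spec
    obtain ⟨hcyK, hcyadj⟩ := (key y hcy.1 _ hcy.2.choose_spec).choose_spec
    rw [← hxy] at hcyadj
    obtain ⟨-, i, hci, hcard, -⟩ := Finset.mem_filter.mp (Finset.mem_inter.mp hcxK).2
    have huniq := (cs.typeII_contacts i hcard).2 _ hci hcx.2.choose hcy.2.choose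
      hcxadj hcyadj
    rw [← hcx.2.choose_spec, ← hcy.2.choose_spec, huniq]

end TameCutsetAux

/-- A tame generalized cutset blocks connected EF1 (hence EF1-outer) allocations,
for each number of agents `n` in the critical interval, under some common additive valuation. -/
theorem tame_cutset_blocks_EF1_additive {V : Type*} [Fintype V] [DecidableEq V]
    (G : SimpleGraph V) (hG : G.Connected) (cs : GenCutset G) (htame : cs.Tame)
    (n : ℕ) (hn₁ : cs.valence < n) (hn₂ : n < cs.valence + cs.r) :
    ∃ v : Finset V → ℝ, IsAdditiveVal v ∧
      ∀ A : Fin n → Finset V, IsConnAlloc G A →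
        ¬ IsEF1 (fun _ : Fin n => v) A ∧ ¬ IsEF1Outer G (fun _ : Fin n => v) A := by
  classical
  open TameCutsetAux in
  refine ⟨fun S => ((vN cs S : ℕ) : ℝ), ⟨fun S => Nat.cast_nonneg _, ?_⟩, ?_⟩
  · intro S
    simp only [TameCutsetAux.vN, Finset.sum_singleton, Nat.cast_sum]
  · intro A hA
    suffices hef : ¬ IsEF1 (fun _ : Fin n => fun S => ((TameCutsetAux.vN cs S : ℕ) : ℝ)) A by
      refine ⟨hef, fun hout => hef ?_⟩
      intro i j
      rcases hout i j with h' | ⟨x, hx, -, hge⟩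
      · exact Or.inl h'
      · exact Or.inr ⟨x, hx, hge⟩
    intro hef
    -- abbreviations
    set aF : Fin n → ℕ := fun i => (A i ∩ TameCutsetAux.Rset cs).card with haF
    set kF : Fin n → ℕ := fun i => (A i ∩ TameCutsetAux.Kset cs).card with hkF
    set bF : Fin n → ℕ := fun i => (A i ∩ TameCutsetAux.Tset cs).card with hbF
    have hsumA : ∑ i, aF i = cs.valence + cs.r := by
      rw [haF, TameCutsetAux.sum_inter_card A hA.1, TameCutsetAux.card_R]
    have hsumK : ∑ i, kF i = (TameCutsetAux.Kset cs).card := by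
      rw [hkF, TameCutsetAux.sum_inter_card A hA.1]
    have hsumB : ∑ i, bF i = (TameCutsetAux.Tset cs).card := by
      rw [hbF, TameCutsetAux.sum_inter_card A hA.1]
    have hvN : ∀ j, TameCutsetAux.vN cs (A j)
        = TameCutsetAux.BN cs * bF j + 2 * aF j + kF j := by
      intro j; rw [TameCutsetAux.vN_eq]
    have hK := TameCutsetAux.card_K cs htame
    have hT' := TameCutsetAux.card_T cs
    have ht1 := TameCutsetAux.t1_le cs
    -- there is a piece with no type-I vertex
    have hexists : ∃ i, bF i = 0 := by
      by_contra h
      push_neg at h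
      have h1 : ∀ i : Fin n, 1 ≤ bF i := fun i => Nat.pos_of_ne_zero (h i)
      have h2 : n ≤ ∑ i, bF i := by
        calc n = ∑ _i : Fin n, 1 := by simp
          _ ≤ ∑ i, bF i := Finset.sum_le_sum fun i _ => h1 i
      omega
    obtain ⟨i₀, hi₀⟩ := hexists
    -- minimum piece among those with no type-I vertex
    obtain ⟨istar, histar, hmin'⟩ := Finset.exists_min_image
      (Finset.univ.filter fun i => bF i = 0) (fun i => TameCutsetAux.vN cs (A i))
      ⟨i₀, Finset.mem_filter.mpr ⟨Finset.mem_univ _, hi₀⟩⟩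
    have hbstar : bF istar = 0 := (Finset.mem_filter.mp histar).2
    set ℓ : ℕ := TameCutsetAux.vN cs (A istar) with hldef
    have hmin : ∀ j, bF j = 0 → ℓ ≤ TameCutsetAux.vN cs (A j) := fun j hj =>
      hmin' j (Finset.mem_filter.mpr ⟨Finset.mem_univ _, hj⟩)
    have hlbound : ℓ ≤ 2 * (cs.valence + cs.r) + 2 * cs.valence + 1 := by
      rw [hldef, hvN istar, hbstar]
      have h1 : aF istar ≤ cs.valence + cs.r := by
        rw [haF, ← TameCutsetAux.card_R cs]
        exact Finset.card_le_card (Finset.inter_subset_right)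
      have h2 : kF istar ≤ (TameCutsetAux.Kset cs).card :=
        Finset.card_le_card (Finset.inter_subset_right)
      omega
    have hBl : ℓ + 3 ≤ TameCutsetAux.BN cs := by
      rw [TameCutsetAux.BN]; omega
    -- w of a vertex not in Tset is at most 2
    have hwsmall : ∀ x : V, x ∉ TameCutsetAux.Tset cs → TameCutsetAux.w cs x ≤ 2 := by
      intro x hx
      rw [TameCutsetAux.w, if_neg hx]
      split_ifs <;> omega
    have hwles : ∀ x : V, TameCutsetAux.w cs x ≤ TameCutsetAux.BN cs := by
      intro x
      rw [TameCutsetAux.w]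
      split_ifs <;> [exact le_rfl; omega; omega; omega]
    have herase : ∀ j, ∀ x ∈ A j,
        TameCutsetAux.vN cs ((A j).erase x) + TameCutsetAux.w cs x
          = TameCutsetAux.vN cs (A j) :=
      fun j x hx => Finset.sum_erase_add _ _ hx
    -- EF1 consequences
    have hC1 : ∀ j, bF j = 0 → 2 * aF j + kF j ≤ ℓ + 2 := by
      intro j hbj
      have hvj : TameCutsetAux.vN cs (A j) = 2 * aF j + kF j := by
        rw [hvN j, hbj]; ring
      have hTj : A j ∩ TameCutsetAux.Tset cs = ∅ := Finset.card_eq_zero.mp hbj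
      rcases hef istar j with h | ⟨x, hx, h⟩
      · have h' : TameCutsetAux.vN cs (A j) ≤ ℓ := Nat.cast_le.mp h
        omega
      · have h' : TameCutsetAux.vN cs ((A j).erase x) ≤ ℓ := Nat.cast_le.mp h
        have hxT : x ∉ TameCutsetAux.Tset cs := by
          intro hxT
          exact (Finset.eq_empty_iff_forall_notMem.mp hTj x)
            (Finset.mem_inter.mpr ⟨hx, hxT⟩)
        have hw2 := hwsmall x hxT
        have he := herase j x hx
        omega
    have hC2 : ∀ j, bF j ≠ 0 → 2 * aF j + kF j ≤ ℓ := by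
      intro j hbj
      have h1 : 1 ≤ bF j := Nat.pos_of_ne_zero hbj
      have hvj := hvN j
      have hBb : TameCutsetAux.BN cs ≤ TameCutsetAux.BN cs * bF j :=
        Nat.le_mul_of_pos_right _ h1
      rcases hef istar j with h | ⟨x, hx, h⟩
      · have h' : TameCutsetAux.vN cs (A j) ≤ ℓ := Nat.cast_le.mp h
        omega
      · have h' : TameCutsetAux.vN cs ((A j).erase x) ≤ ℓ := Nat.cast_le.mp h
        have he := herase j x hx
        by_cases hxT : x ∈ TameCutsetAux.Tset cs
        · have hwx : TameCutsetAux.w cs x = TameCutsetAux.BN cs := if_pos hxT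
          rcases Nat.lt_or_ge (bF j) 2 with h2 | h2
          · have hb1 : bF j = 1 := by omega
            rw [hb1] at hvj
            omega
          · have : TameCutsetAux.BN cs * 2 ≤ TameCutsetAux.BN cs * bF j :=
              Nat.mul_le_mul_left _ h2
            omega
        · have hw2 := hwsmall x hxT
          omega
    have hL2 : ∀ j, bF j = 0 → (aF j ≤ 1 ∨ aF j ≤ kF j) := fun j hb =>
      TameCutsetAux.key_struct cs (A j) (hA.2 j) (Finset.card_eq_zero.mp hb)
    by_cases hl3 : ℓ ≤ 3
    · -- every piece holds at most one representative
      have hall : ∀ j, aF j ≤ 1 := by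
        intro j
        by_cases hbj : bF j = 0
        · rcases hL2 j hbj with h | h
          · exact h
          · have := hC1 j hbj; omega
        · have := hC2 j hbj; omega
      have hs : ∑ i, aF i ≤ ∑ _i : Fin n, 1 := Finset.sum_le_sum fun i _ => hall i
      have hn' : ∑ _i : Fin n, (1:ℕ) = n := by simp
      omega
    · push_neg at hl3
      have hk2 : ∀ j, bF j = 0 → 2 ≤ kF j := by
        intro j hbj
        have h1 := hC1 j hbj
        have h2 := hmin j hbj
        have hvj : TameCutsetAux.vN cs (A j) = 2 * aF j + kF j := by
          rw [hvN j, hbj]; ring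
        rcases hL2 j hbj with h | h <;> omega
      have h2c0 : 2 * (Finset.univ.filter fun i => bF i = 0).card
          ≤ (TameCutsetAux.Kset cs).card := by
        calc 2 * (Finset.univ.filter fun i => bF i = 0).card
            = ∑ _i ∈ Finset.univ.filter fun i => bF i = 0, 2 := by
              rw [Finset.sum_const, smul_eq_mul, mul_comm]
          _ ≤ ∑ i ∈ Finset.univ.filter fun i => bF i = 0, kF i :=
              Finset.sum_le_sum fun i hi => hk2 i (Finset.mem_filter.mp hi).2
          _ ≤ ∑ i, kF i := Finset.sum_le_sum_of_subset (Finset.filter_subset _ _)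
          _ = (TameCutsetAux.Kset cs).card := hsumK
      have hc1 : (Finset.univ.filter fun i => ¬ bF i = 0).card
          ≤ (TameCutsetAux.Tset cs).card := by
        calc (Finset.univ.filter fun i => ¬ bF i = 0).card
            = ∑ _i ∈ Finset.univ.filter fun i => ¬ bF i = 0, 1 := by
              rw [Finset.sum_const, smul_eq_mul, mul_one]
          _ ≤ ∑ i ∈ Finset.univ.filter fun i => ¬ bF i = 0, bF i :=
              Finset.sum_le_sum fun i hi =>
                Nat.pos_of_ne_zero (Finset.mem_filter.mp hi).2
          _ ≤ ∑ i, bF i := Finset.sum_le_sum_of_subset (Finset.filter_subset _ _)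
          _ = (TameCutsetAux.Tset cs).card := hsumB
      have hsplit : (Finset.univ.filter fun i => bF i = 0).card
          + (Finset.univ.filter fun i => ¬ bF i = 0).card = n := by
        rw [Finset.card_filter_add_card_filter_not, Finset.card_univ,
          Fintype.card_fin]
      omega
end

section
/- Let G = (V,E) be a finite connected graph with a generalized cutset C = {C_1, ..., C_t} and witness partition H = {H_1, ..., H_{Στ+r}}. Then every subset A ⊆ V that induces a connected subgraph of G and contains vertices belonging to two distinct parts of H dominates some member of C. Consequently, in every connected allocation, a privileged agent is never deprived. -/
open Finset

variable {V : Type*}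

lemma GenCutset.key {V : Type*} [Fintype V] [DecidableEq V]
    (G : SimpleGraph V) (cs : GenCutset G) (S : Finset V) : ∀ n : ℕ,
    (∀ (x y : V) (w : G.Walk x y), w.length ≤ n → (∀ v ∈ w.support, v ∈ S) →
      ∀ j k, j ≠ k → x ∈ cs.H j → y ∈ cs.H k → ∃ i, cs.Dominates S i)
    ∧
    (∀ (c y : V) (w : G.Walk c y), w.length ≤ n → (∀ v ∈ w.support, v ∈ S) →
      ∀ i, c ∈ cs.C i → 1 < (cs.C i).card →
      ∀ c0, c0 ∈ cs.C i → c0 ∈ S →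
      ∀ j, (∃ z ∈ cs.H j, G.Adj c0 z) →
      ∀ k, j ≠ k → y ∈ cs.H k → ∃ i', cs.Dominates S i') := by
  classical
  -- helper facts
  have hCH : ∀ (x : V) (i), x ∈ cs.C i → ∀ j, x ∉ cs.H j := by
    intro x i hxC j hxH
    exact ((cs.H_partition x).mpr ⟨j, hxH⟩) i hxC
  have hHC : ∀ (x : V), (¬ ∃ j, x ∈ cs.H j) → ∃ i, x ∈ cs.C i := by
    intro x hx
    by_contra h
    push_neg at h
    exact hx ((cs.H_partition x).mp h)
  intro n
  induction n with
  | zero =>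
    constructor
    · intro x y w hlen hsupp j k hjk hx hy
      cases w with
      | nil =>
        exact absurd hy (Finset.disjoint_left.mp (cs.H_disjoint j k hjk) hx)
      | cons h w' => simp [SimpleGraph.Walk.length_cons] at hlen
    · intro c y w hlen hsupp i hc hcard c0 hc0 hc0S j hj k hjk hy
      cases w with
      | nil => exact absurd hy (hCH c i hc k)
      | cons h w' => simp [SimpleGraph.Walk.length_cons] at hlen
  | succ n ih =>
    obtain ⟨ih1, ih2⟩ := ih
    constructor
    · -- P1
      intro x y w hlen hsupp j k hjk hx hy
      cases w with
      | nil =>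
        exact absurd hy (Finset.disjoint_left.mp (cs.H_disjoint j k hjk) hx)
      | @cons _ x₁ _ h w' =>
        have hlen' : w'.length ≤ n := by
          simpa [SimpleGraph.Walk.length_cons] using hlen
        have hsupp' : ∀ v ∈ w'.support, v ∈ S := by
          intro v hv; exact hsupp v (by simp [SimpleGraph.Walk.support_cons, hv])
        by_cases hx1 : ∃ j', x₁ ∈ cs.H j'
        · obtain ⟨j', hj'⟩ := hx1
          by_cases hjj : j' = j
          · subst hjj
            exact ih1 x₁ y w' hlen' hsupp' j' k hjk hj' hy
          · exact absurd h (cs.H_independent j j' (fun e => hjj e.symm) x hx x₁ hj')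
        · obtain ⟨i, hi⟩ := hHC x₁ hx1
          rcases Nat.lt_or_ge 1 (cs.C i).card with hcard | hcard
          · -- type II : apply P2
            have hx₁S : x₁ ∈ S := hsupp' x₁ (SimpleGraph.Walk.start_mem_support w')
            exact ih2 x₁ y w' hlen' hsupp' i hi hcard x₁ hi hx₁S j
              ⟨x, hx, h.symm⟩ k hjk hy
          · -- singleton : dominated
            have h1 : (cs.C i).card = 1 :=
              le_antisymm hcard (Finset.card_pos.mpr (cs.C_nonempty i))
            obtain ⟨a, ha⟩ := Finset.card_eq_one.mp h1
            refine ⟨i, Or.inl ⟨h1, ?_⟩⟩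
            have hx₁S : x₁ ∈ S := hsupp' x₁ (SimpleGraph.Walk.start_mem_support w')
            intro v hv
            rw [ha, Finset.mem_singleton] at hv hi
            subst hv
            rw [← hi]
            exact hx₁S
    · -- P2
      intro c y w hlen hsupp i hc hcard c0 hc0 hc0S j hj k hjk hy
      cases w with
      | nil => exact absurd hy (hCH c i hc k)
      | @cons _ x₁ _ h w' =>
        have hlen' : w'.length ≤ n := by
          simpa [SimpleGraph.Walk.length_cons] using hlen
        have hsupp' : ∀ v ∈ w'.support, v ∈ S := by
          intro v hv; exact hsupp v (by simp [SimpleGraph.Walk.support_cons, hv])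
        have hcS : c ∈ S := hsupp c (SimpleGraph.Walk.start_mem_support _)
        by_cases hx1 : ∃ j', x₁ ∈ cs.H j'
        · obtain ⟨j', hj'⟩ := hx1
          by_cases hcc : c = c0
          · subst hcc
            have hjj : j' = j :=
              (cs.typeII_contacts i hcard).2 c hc j' j ⟨x₁, hj', h⟩ hj
            subst hjj
            exact ih1 x₁ y w' hlen' hsupp' j' k hjk hj' hy
          · exact ⟨i, Or.inr ⟨hcard, c0, hc0, hc0S, c, hc, hcS, fun e => hcc e.symm,
              ⟨j, hj⟩, ⟨j', x₁, hj', h⟩⟩⟩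
        · obtain ⟨i₂, hi₂⟩ := hHC x₁ hx1
          by_cases hii : i₂ = i
          · subst hii
            exact ih2 x₁ y w' hlen' hsupp' i₂ hi₂ hcard c0 hc0 hc0S j hj k hjk hy
          · rcases Nat.lt_or_ge 1 (cs.C i₂).card with hcard2 | hcard2
            · exact absurd h (cs.typeII_indep i i₂ (fun e => hii e.symm) hcard hcard2
                c hc x₁ hi₂)
            · have h1 : (cs.C i₂).card = 1 :=
                le_antisymm hcard2 (Finset.card_pos.mpr (cs.C_nonempty i₂))
              obtain ⟨a, ha⟩ := Finset.card_eq_one.mp h1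
              refine ⟨i₂, Or.inl ⟨h1, ?_⟩⟩
              have hx₁S : x₁ ∈ S := hsupp' x₁ (SimpleGraph.Walk.start_mem_support w')
              intro v hv
              rw [ha, Finset.mem_singleton] at hv hi₂
              subst hv
              rw [← hi₂]
              exact hx₁S

/-- Every connected subset of vertices meeting two distinct parts of the
witness partition dominates some member of the cutset; consequently, in every connected
allocation a privileged agent is never deprived. -/
theorem connected_set_meeting_two_parts_dominates {V : Type*} [Fintype V] [DecidableEq V]
    (G : SimpleGraph V) (hG : G.Connected) (cs : GenCutset G) :
    ∀ S : Finset V, (G.induce (S : Set V)).Connected →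
      (∃ j k : Fin (cs.valence + cs.r), j ≠ k ∧
        (∃ x ∈ S, x ∈ cs.H j) ∧ (∃ y ∈ S, y ∈ cs.H k)) →
      ∃ i : Fin cs.t, cs.Dominates S i := by
  intro S hS ⟨j, k, hjk, ⟨x, hxS, hxH⟩, ⟨y, hyS, hyH⟩⟩
  have hreach : (G.induce (S : Set V)).Reachable ⟨x, by exact_mod_cast hxS⟩ ⟨y, by exact_mod_cast hyS⟩ :=
    hS.preconnected _ _
  obtain ⟨p⟩ := hreach
  let w : G.Walk x y := p.map (SimpleGraph.Embedding.induce (S : Set V)).toHom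
  have hsupp : ∀ v ∈ w.support, v ∈ S := by
    intro v hv
    rw [show w.support = _ from SimpleGraph.Walk.support_map _ _, List.mem_map] at hv
    obtain ⟨u, _, rfl⟩ := hv
    exact_mod_cast u.2
  exact (GenCutset.key G cs S w.length).1 x y w le_rfl hsupp j k hjk hxH hyH
end

section
/- Let G be the 6-vertex 'friendly diamond' graph with vertex set {p, a, c, d, b, q} and edges p–a, a–c, a–d, c–b, d–b, b–q, and let v be the common additive valuation assigning weight 1 to every vertex. Then there is no connected EF1 allocation of G among 3 agents with this valuation (hence no connected EF1-outer allocation). -/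
open Finset

variable {V : Type*}

/-- The 'friendly diamond' graph: vertices p,a,c,d,b,q are 0,…,5;
edges p–a, a–c, a–d, c–b, d–b, b–q. -/
def FriendlyDiamond : SimpleGraph (Fin 6) :=
  SimpleGraph.fromRel (fun x y =>
    (x, y) ∈ ([(0,1),(1,2),(1,3),(2,4),(3,4),(4,5)] : List (Fin 6 × Fin 6)))

/-- The common additive valuation assigning weight 1 to every vertex. -/
def fdV (S : Finset (Fin 6)) : ℝ := ∑ _x ∈ S, (1 : ℝ)

instance : DecidableRel FriendlyDiamond.Adj := fun x y =>
  decidable_of_iff _ (SimpleGraph.fromRel_adj _ x y).symm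

lemma two_adj {α : Type*} (G : SimpleGraph α) {S : Set α}
    (h : (G.induce S).Connected) {x y : α} (hx : x ∈ S) (hy : y ∈ S)
    (hS : S ⊆ {x, y}) (hxy : x ≠ y) : G.Adj x y := by
  obtain ⟨w⟩ := h.preconnected ⟨x, hx⟩ ⟨y, hy⟩
  have hne : (⟨x, hx⟩ : S) ≠ ⟨y, hy⟩ := fun h => hxy (congrArg Subtype.val h)
  have hadj0 := SimpleGraph.Walk.adj_snd (p := w) (SimpleGraph.Walk.not_nil_of_ne hne)
  rw [SimpleGraph.comap_adj] at hadj0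
  have hadj : G.Adj x ((w.getVert 1 : S) : α) := hadj0
  rcases hS (w.getVert 1).2 with h1 | h1
  · exact absurd (h1 ▸ hadj) (G.irrefl)
  · exact h1 ▸ hadj

lemma piece_adj (S : Finset (Fin 6)) (hc : ConnPiece FriendlyDiamond S)
    (h2 : S.card = 2) : ∀ x ∈ S, ∃ z ∈ S, z ≠ x ∧ FriendlyDiamond.Adj x z := by
  intro x hx
  obtain ⟨a, b, hab, rfl⟩ := Finset.card_eq_two.mp h2
  rcases hc with he | hc
  · simp at he
  rcases Finset.mem_insert.mp hx with rfl | hb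
  · refine ⟨b, by simp, fun h => hab h.symm, ?_⟩
    exact two_adj _ hc (by simp) (by simp) (by intro t ht; simpa using ht) hab
  · rw [Finset.mem_singleton] at hb
    subst hb
    refine ⟨a, by simp, fun h => hab h, ?_⟩
    refine two_adj _ hc (by simp) (by simp) ?_ (Ne.symm hab)
    intro t ht
    simp only [Finset.coe_insert, Finset.coe_singleton, Set.mem_insert_iff,
      Set.mem_singleton_iff] at ht ⊢
    tauto

/-- with the all-ones common additive valuation, there is no connected EF1
(hence no connected EF1-outer) allocation of the friendly diamond among 3 agents. -/
theorem friendly_diamond_no_connected_EF1 :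
    ¬ ∃ A : Fin 3 → Finset (Fin 6), IsConnAlloc FriendlyDiamond A ∧
        (IsEF1 (fun _ : Fin 3 => fdV) A ∨
          IsEF1Outer FriendlyDiamond (fun _ : Fin 3 => fdV) A) := by
  rintro ⟨A, ⟨hpart, hconn⟩, hEF⟩
  have key : ∀ S : Finset (Fin 6), fdV S = (S.card : ℝ) := by
    intro S; simp [fdV]
  -- EF1 card inequality
  have hcard : ∀ i j : Fin 3, (A j).card ≤ (A i).card + 1 := by
    intro i j
    have h : fdV (A i) ≥ fdV (A j) ∨ ∃ x ∈ A j, fdV (A i) ≥ fdV ((A j).erase x) := by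
      rcases hEF with h | h
      · exact h i j
      · rcases h i j with h | ⟨x, hx, _, h⟩
        · exact Or.inl h
        · exact Or.inr ⟨x, hx, h⟩
    rcases h with h | ⟨x, hx, h⟩
    · rw [key, key] at h
      have : (A j).card ≤ (A i).card := by exact_mod_cast h
      omega
    · rw [key, key] at h
      have h1 : ((A j).erase x).card ≤ (A i).card := by exact_mod_cast h
      have h3 : ((A j).erase x).card = (A j).card - 1 := Finset.card_erase_of_mem hx
      have h4 : 1 ≤ (A j).card := Finset.card_pos.mpr ⟨x, hx⟩
      omega
  -- disjointness
  have hdisj : ∀ i j : Fin 3, i ≠ j → Disjoint (A i) (A j) := by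
    intro i j hij
    rw [Finset.disjoint_left]
    intro x hxi hxj
    obtain ⟨k, _, hku⟩ := hpart x
    exact hij ((hku i hxi).trans (hku j hxj).symm)
  -- sum of cards = 6
  have hsum : (A 0).card + (A 1).card + (A 2).card = 6 := by
    have huniv : (Finset.univ : Finset (Fin 3)).biUnion A = (Finset.univ : Finset (Fin 6)) :=
      Finset.eq_univ_iff_forall.mpr fun x => by
        obtain ⟨i, hi, _⟩ := hpart x
        exact Finset.mem_biUnion.mpr ⟨i, Finset.mem_univ i, hi⟩
    have h6 : (Finset.univ : Finset (Fin 6)).card = 6 := by simp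
    rw [← huniv, Finset.card_biUnion (fun i _ j _ hij => hdisj i j hij)] at h6
    simpa [Fin.sum_univ_three] using h6
  have h2 : ∀ i, (A i).card = 2 := by
    have a01 := hcard 0 1
    have a10 := hcard 1 0
    have a02 := hcard 0 2
    have a20 := hcard 2 0
    have a12 := hcard 1 2
    have a21 := hcard 2 1
    have h20 : (A 0).card = 2 := by omega
    have h21 : (A 1).card = 2 := by omega
    have h22 : (A 2).card = 2 := by omega
    intro i
    fin_cases i <;> assumption
  -- adjacency facts
  have adj0 : ∀ y, FriendlyDiamond.Adj 0 y → y = 1 := by decide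
  have adj5 : ∀ y, FriendlyDiamond.Adj 5 y → y = 4 := by decide
  have adj2v : ∀ y, FriendlyDiamond.Adj 2 y → y = 1 ∨ y = 4 := by decide
  -- pieces
  obtain ⟨i0, h0mem, _⟩ := hpart 0
  obtain ⟨z0, hz0mem, _, hz0adj⟩ := piece_adj (A i0) (hconn i0) (h2 i0) 0 h0mem
  have hz0 : z0 = 1 := adj0 z0 hz0adj
  subst hz0
  obtain ⟨i5, h5mem, _⟩ := hpart 5
  obtain ⟨z5, hz5mem, _, hz5adj⟩ := piece_adj (A i5) (hconn i5) (h2 i5) 5 h5mem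
  have hz5 : z5 = 4 := adj5 z5 hz5adj
  subst hz5
  obtain ⟨i2, h2mem, _⟩ := hpart 2
  obtain ⟨z2, hz2mem, _, hz2adj⟩ := piece_adj (A i2) (hconn i2) (h2 i2) 2 h2mem
  rcases adj2v z2 hz2adj with rfl | rfl
  · -- z2 = 1, so 1 ∈ A i2 and 1 ∈ A i0
    obtain ⟨k, _, hku⟩ := hpart 1
    have e : i2 = i0 := (hku i2 hz2mem).trans (hku i0 hz0mem).symm
    subst e
    have hsub : ({0, 1, 2} : Finset (Fin 6)) ⊆ A i2 := by
      simp only [Finset.insert_subset_iff, Finset.singleton_subset_iff]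
      exact ⟨h0mem, hz0mem, h2mem⟩
    have := Finset.card_le_card hsub
    rw [h2 i2] at this
    simp at this
  · obtain ⟨k, _, hku⟩ := hpart 4
    have e : i2 = i5 := (hku i2 hz2mem).trans (hku i5 hz5mem).symm
    subst e
    have hsub : ({2, 4, 5} : Finset (Fin 6)) ⊆ A i2 := by
      simp only [Finset.insert_subset_iff, Finset.singleton_subset_iff]
      exact ⟨h2mem, hz2mem, h5mem⟩
    have := Finset.card_le_card hsub
    rw [h2 i2] at this
    simp at this
end

section
/- Let L* be the 8-vertex graph with vertex set {a, b, c, v1, v2, v3, v4, v5} and edges a–v2, v2–b, a–v1, v1–b, b–v4, v4–c, b–v3, v3–c, a–v5, v5–c. Then there exists a common additive valuation (for instance, weight 1 on every vertex) such that no connected EF1 allocation of L* among 4 agents exists (hence no connected EF1-outer allocation). -/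
open Finset

variable {V : Type*}

/-- The graph `L*`: vertices a,b,c,v1,v2,v3,v4,v5 are 0,1,2,3,4,5,6,7;
edges a–v2, v2–b, a–v1, v1–b, b–v4, v4–c, b–v3, v3–c, a–v5, v5–c. -/
def Lstar : SimpleGraph (Fin 8) :=
  SimpleGraph.fromRel (fun x y =>
    (x, y) ∈ ([(0,4),(4,1),(0,3),(3,1),(1,6),(6,2),(1,5),(5,2),(0,7),(7,2)] :
      List (Fin 8 × Fin 8)))


instance Lstar.adjDecidable : DecidableRel Lstar.Adj := fun x y => by
  rw [Lstar, SimpleGraph.fromRel_adj]; infer_instance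

set_option maxRecDepth 40000 in
lemma lstar_nonadj : ∀ x ∈ ({3, 4, 5, 6, 7} : Finset (Fin 8)),
    ∀ y ∈ ({3, 4, 5, 6, 7} : Finset (Fin 8)), ¬ Lstar.Adj x y := by decide

lemma adj_of_connected_pair {W : Type*} (G : SimpleGraph W) {x y : W} (hxy : x ≠ y)
    (h : (G.induce ({x, y} : Set W)).Connected) : G.Adj x y := by
  have hx : x ∈ ({x, y} : Set W) := Or.inl rfl
  have hy : y ∈ ({x, y} : Set W) := Or.inr rfl
  obtain ⟨w⟩ := h.preconnected ⟨x, hx⟩ ⟨y, hy⟩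
  cases w with
  | nil => exact absurd rfl hxy
  | cons hadj p =>
    rename_i b
    have h2 : G.Adj x b.val := hadj
    rcases b.2 with hb | hb
    · rw [hb] at h2; exact absurd h2 (G.irrefl)
    · rwa [hb] at h2

lemma lstar_main (A : Fin 4 → Finset (Fin 8)) (hA : IsConnAlloc Lstar A) :
    ¬ IsEF1 (fun _ : Fin 4 => fun S : Finset (Fin 8) => ((S.card : ℕ) : ℝ)) A := by
  intro hEF1
  obtain ⟨hpart, hconn⟩ := hA
  choose f hf using fun x => (hpart x).exists
  have hdisj : ∀ i j, i ≠ j → Disjoint (A i) (A j) := by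
    intro i j hij
    refine Finset.disjoint_left.mpr fun x hxi hxj => hij ?_
    obtain ⟨_, _, huniq⟩ := hpart x
    exact (huniq i hxi).trans (huniq j hxj).symm
  have hsum : ∑ i, (A i).card = 8 := by
    have hcov : (Finset.univ : Finset (Fin 8)) = Finset.univ.biUnion A := by
      ext x
      simp only [Finset.mem_biUnion, Finset.mem_univ, true_iff]
      exact ⟨f x, by simp [hf x]⟩
    have h8 : (Finset.univ : Finset (Fin 8)).card = 8 := by simp
    rw [hcov, Finset.card_biUnion (fun i _ j _ hij => hdisj i j hij)] at h8
    exact h8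
  have hb : ∀ i j, (A j).card ≤ (A i).card + 1 := by
    intro i j
    rcases hEF1 i j with h | ⟨x, hx, h⟩
    · have := Nat.cast_le.mp (h : ((A j).card : ℝ) ≤ (A i).card)
      omega
    · have h' : ((A j).erase x).card ≤ (A i).card :=
        Nat.cast_le.mp (h : (((A j).erase x).card : ℝ) ≤ (A i).card)
      have := Finset.card_erase_of_mem hx
      omega
  have hc2 : ∀ i, (A i).card = 2 := by
    have e := hsum
    rw [Fin.sum_univ_four] at e
    have h01 := hb 0 1; have h02 := hb 0 2; have h03 := hb 0 3
    have h10 := hb 1 0; have h12 := hb 1 2; have h13 := hb 1 3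
    have h20 := hb 2 0; have h21 := hb 2 1; have h23 := hb 2 3
    have h30 := hb 3 0; have h31 := hb 3 1; have h32 := hb 3 2
    have h4 : (A 0).card = 2 ∧ (A 1).card = 2 ∧ (A 2).card = 2 ∧ (A 3).card = 2 := by omega
    intro i
    fin_cases i
    · exact h4.1
    · exact h4.2.1
    · exact h4.2.2.1
    · exact h4.2.2.2
  have hmap : ∀ x ∈ ({3, 4, 5, 6, 7} : Finset (Fin 8)), f x ∈ (Finset.univ : Finset (Fin 4)) :=
    fun x _ => Finset.mem_univ _
  obtain ⟨x, hx, y, hy, hxy, hfxy⟩ :=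
    Finset.exists_ne_map_eq_of_card_lt_of_maps_to (by decide) hmap
  have hxA : x ∈ A (f x) := hf x
  have hyA : y ∈ A (f x) := by rw [hfxy]; exact hf y
  have hsub : ({x, y} : Finset (Fin 8)) ⊆ A (f x) := by
    intro z hz
    rcases Finset.mem_insert.mp hz with h | h
    · exact h ▸ hxA
    · exact (Finset.mem_singleton.mp h) ▸ hyA
  have hset : A (f x) = ({x, y} : Finset (Fin 8)) := by
    refine (Finset.eq_of_subset_of_card_le hsub ?_).symm
    rw [hc2, Finset.card_pair hxy]
  have hadj : Lstar.Adj x y := by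
    rcases hconn (f x) with he | hc
    · rw [he] at hxA; exact absurd hxA (Finset.notMem_empty x)
    · rw [hset] at hc
      exact adj_of_connected_pair Lstar hxy (by rwa [Finset.coe_insert, Finset.coe_singleton] at hc)
  exact lstar_nonadj x hx y hy hadj

/-- there is a common additive valuation under which the graph `L*` has no
connected EF1 (hence no connected EF1-outer) allocation among 4 agents. -/
theorem lstar_no_connected_EF1_four_agents :
    ∃ v : Finset (Fin 8) → ℝ, IsAdditiveVal v ∧
      ∀ A : Fin 4 → Finset (Fin 8), IsConnAlloc Lstar A →
        ¬ IsEF1 (fun _ : Fin 4 => v) A ∧ ¬ IsEF1Outer Lstar (fun _ : Fin 4 => v) A := by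
  refine ⟨fun S => ((S.card : ℕ) : ℝ), ⟨fun S => Nat.cast_nonneg _, fun S => by
    simp only [Finset.card_singleton, Nat.cast_one]
    rw [Finset.card_eq_sum_ones S]
    push_cast
    rfl⟩, ?_⟩
  intro A hA
  have key := lstar_main A hA
  refine ⟨key, fun hO => key fun i j => ?_⟩
  rcases hO i j with h | ⟨x, hx, _, h⟩
  · exact Or.inl h
  · exact Or.inr ⟨x, hx, h⟩
end
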